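/- If q is a power of a prime p and p^k divides a with k >= 0 and a a positive integer, then 1 + (q-1) * (sum over integers b with 0 <= b*(q-1) < a of binomial(a, b*(q-1))) is congruent to 0 modulo p^(k+1). -/
import Mathlib

open Finset

namespace CarlitzAux

variable {p : ℕ} [hp : Fact p.Prime] {k : Type*} [Field k] [CharP k p]

local notation "𝕎" => WittVector p

lemma constantCoeff_teich (x : k) :
    WittVector.constantCoeff (WittVector.teichmuller p x) = x := by
  rw [WittVector.constantCoeff_apply, WittVector.teichmuller_coeff_zero]

section Perfect
variable [PerfectRing k p]

lemma p_dvd_of_coeff_zero {x : 𝕎 k} (h : x.coeff 0 = 0) : (p : 𝕎 k) ∣ x := by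
  rcases eq_or_ne x 0 with rfl | hx
  · exact dvd_zero _
  obtain ⟨m, b, hb, rfl⟩ := WittVector.exists_eq_pow_p_mul x hx
  cases m with
  | zero =>
      rw [pow_zero, one_mul] at h
      exact absurd h hb
  | succ m => exact ⟨(p : 𝕎 k) ^ m * b, by ring⟩

lemma int_descent (j : ℕ) (n : ℤ) (h : (p : 𝕎 k) ^ j ∣ ((n : ℤ) : 𝕎 k)) :
    (p : ℤ) ^ j ∣ n := by
  induction j generalizing n with
  | zero => simp
  | succ j ih =>
    have hp0 : (p : 𝕎 k) ≠ 0 := (WittVector.irreducible p).ne_zero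
    have h1 : (p : 𝕎 k) ∣ ((n : ℤ) : 𝕎 k) :=
      dvd_trans (dvd_pow_self _ (Nat.succ_ne_zero j)) h
    have h2 : ((n : ℤ) : k) = 0 := by
      obtain ⟨c, hc⟩ := h1
      have := congrArg WittVector.constantCoeff hc
      rw [map_intCast, map_mul, map_natCast, CharP.cast_eq_zero k p, zero_mul] at this
      exact this
    have h3 : (p : ℤ) ∣ n := (CharP.intCast_eq_zero_iff k p n).mp h2
    obtain ⟨n', rfl⟩ := h3
    have h4 : (p : 𝕎 k) ^ (j + 1) ∣ (p : 𝕎 k) * ((n' : ℤ) : 𝕎 k) := by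
      have : (((p : ℤ) * n' : ℤ) : 𝕎 k) = (p : 𝕎 k) * ((n' : ℤ) : 𝕎 k) := by push_cast; ring
      rwa [this] at h
    obtain ⟨c, hc⟩ := h4
    have h5 : ((n' : ℤ) : 𝕎 k) = (p : 𝕎 k) ^ j * c := by
      apply mul_left_cancel₀ hp0
      rw [hc]; ring
    have h6 : (p : ℤ) ^ j ∣ n' := ih n' ⟨c, h5⟩
    have h7 := mul_dvd_mul_left ((p : ℤ)) h6
    rwa [← pow_succ'] at h7

lemma term_dvd (kk a : ℕ) (hka : p ^ kk ∣ a) (x : k) :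
    (p : 𝕎 k) ^ (kk + 1) ∣
      (1 + WittVector.teichmuller p x) ^ a - (WittVector.teichmuller p (1 + x)) ^ a := by
  have h0 : (p : 𝕎 k) ∣ (1 + WittVector.teichmuller p x) - WittVector.teichmuller p (1 + x) := by
    apply p_dvd_of_coeff_zero
    have : WittVector.constantCoeff
        ((1 + WittVector.teichmuller p x) - WittVector.teichmuller p (1 + x)) = 0 := by
      rw [map_sub, map_add, map_one, constantCoeff_teich, constantCoeff_teich]
      ring
    rwa [WittVector.constantCoeff_apply] at this
  obtain ⟨c, rfl⟩ := hka
  have h1 := dvd_sub_pow_of_dvd_sub h0 kk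
  refine dvd_trans h1 ?_
  rw [pow_mul, pow_mul]
  exact sub_dvd_pow_sub_pow _ _ c

end Perfect

section FintypeField
variable [Fintype k] [DecidableEq k]

lemma sum_field {M : Type*} [AddCommMonoid M] (F : k → M) :
    ∑ x : k, F x = F 0 + ∑ u : kˣ, F u := by
  rw [← Finset.add_sum_erase _ F (mem_univ (0 : k))]
  congr 1
  rw [Finset.sum_subtype (univ.erase (0 : k))
      (p := fun x : k => x ≠ 0) (by simp) F]
  rw [← Equiv.sum_comp (unitsEquivNeZero (G₀ := k)) (fun x : {a : k // a ≠ 0} => F x)]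
  rfl

lemma sum_teich_pow_one {j : ℕ} (hj : (Fintype.card k - 1) ∣ j) :
    ∑ u : kˣ, (WittVector.teichmuller p (u : k)) ^ j
      = ((Fintype.card k - 1 : ℕ) : 𝕎 k) := by
  have hterm : ∀ u : kˣ, (WittVector.teichmuller p (u : k)) ^ j = 1 := by
    intro u
    have hu : (u : k) ^ j = 1 := by
      obtain ⟨c, rfl⟩ := hj
      have : u ^ (Fintype.card k - 1) = 1 := by
        rw [← Fintype.card_units]; exact pow_card_eq_one
      calc (u : k) ^ ((Fintype.card k - 1) * c)
          = ((u ^ ((Fintype.card k - 1) * c) : kˣ) : k) := by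
            rw [Units.val_pow_eq_pow_val]
        _ = 1 := by rw [pow_mul, this, one_pow, Units.val_one]
    rw [← map_pow, hu, map_one]
  rw [Finset.sum_congr rfl fun u _ => hterm u, Finset.sum_const, card_univ,
    Fintype.card_units, nsmul_eq_mul, mul_one]

lemma sum_teich_pow_zero' {j : ℕ} (hj : ¬ (Fintype.card k - 1) ∣ j) :
    ∑ u : kˣ, (WittVector.teichmuller p (u : k)) ^ j = 0 := by
  obtain ⟨g, hg⟩ := IsCyclic.exists_generator (α := kˣ)
  set t : k →* WittVector p k := WittVector.teichmuller p with ht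
  set S := ∑ u : kˣ, (t (u : k)) ^ j with hS
  have horder : orderOf g = Fintype.card k - 1 := by
    rw [orderOf_eq_card_of_forall_mem_zpowers hg, Nat.card_eq_fintype_card, Fintype.card_units]
  have hgj : (g : k) ^ j ≠ 1 := by
    intro hgj1
    apply hj
    rw [← horder, orderOf_dvd_iff_pow_eq_one]
    ext
    rw [Units.val_pow_eq_pow_val, hgj1, Units.val_one]
  have htrans : (t (g : k)) ^ j * S = S := by
    rw [hS, Finset.mul_sum]
    calc ∑ u : kˣ, (t (g : k)) ^ j * (t (u : k)) ^ j
        = ∑ u : kˣ, (t ((g * u : kˣ) : k)) ^ j := by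
          refine Finset.sum_congr rfl fun u _ => ?_
          rw [Units.val_mul, map_mul, mul_pow]
      _ = ∑ u : kˣ, (t (u : k)) ^ j := by
          exact Equiv.sum_comp (Equiv.mulLeft g) (fun u : kˣ => (t (u : k)) ^ j)
  have hz : ((t (g : k)) ^ j - 1) * S = 0 := by
    rw [sub_mul, one_mul, htrans, sub_self]
  rcases mul_eq_zero.mp hz with h | h
  · exfalso
    apply hgj
    have h1 : (t (g : k)) ^ j = 1 := by rwa [sub_eq_zero] at h
    have := congrArg WittVector.constantCoeff h1
    rwa [map_pow, ht, constantCoeff_teich, map_one] at this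
  · exact h

/-- The power sum values. -/
def gam (q j : ℕ) : ℤ :=
  if j = 0 then (q : ℤ) else if (q - 1) ∣ j then ((q - 1 : ℕ) : ℤ) else 0

lemma sum_teich_pow (j : ℕ) :
    ∑ x : k, (WittVector.teichmuller p x) ^ j
      = ((gam (Fintype.card k) j : ℤ) : 𝕎 k) := by
  rcases eq_or_ne j 0 with rfl | hj0
  · simp only [pow_zero, Finset.sum_const, card_univ, nsmul_eq_mul, mul_one, gam, if_pos rfl]
    push_cast; ring
  · rw [sum_field (fun x : k => (WittVector.teichmuller p x) ^ j)]
    rw [WittVector.teichmuller_zero, zero_pow hj0, zero_add]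
    by_cases hd : (Fintype.card k - 1) ∣ j
    · rw [sum_teich_pow_one hd, gam, if_neg hj0, if_pos hd, Int.cast_natCast]
    · rw [sum_teich_pow_zero' hd, gam, if_neg hj0, if_neg hd, Int.cast_zero]

variable [PerfectRing k p]

lemma witt_main (kk a : ℕ) (ha : 0 < a) (hka : p ^ kk ∣ a) :
    (p : ℤ) ^ (kk + 1) ∣
      (∑ j ∈ range (a + 1), (a.choose j : ℤ) * gam (Fintype.card k) j)
        - gam (Fintype.card k) a := by
  apply int_descent (k := k)
  set t : k →* WittVector p k := WittVector.teichmuller p with ht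
  have hA : ∑ x : k, (1 + t x) ^ a
      = ∑ j ∈ range (a + 1), ((a.choose j : ℤ) : 𝕎 k) * ((gam (Fintype.card k) j : ℤ) : 𝕎 k) := by
    calc ∑ x : k, (1 + t x) ^ a
        = ∑ x : k, ∑ j ∈ range (a + 1), (t x) ^ j * 1 ^ (a - j) * (a.choose j : 𝕎 k) := by
          refine Finset.sum_congr rfl fun x _ => ?_
          rw [add_comm, add_pow]
      _ = ∑ j ∈ range (a + 1), ∑ x : k, (t x) ^ j * 1 ^ (a - j) * (a.choose j : 𝕎 k) :=
          Finset.sum_comm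
      _ = ∑ j ∈ range (a + 1), ((a.choose j : ℤ) : 𝕎 k) * ((gam (Fintype.card k) j : ℤ) : 𝕎 k) := by
          refine Finset.sum_congr rfl fun j _ => ?_
          simp only [one_pow, mul_one]
          rw [← Finset.sum_mul, ht, sum_teich_pow j]
          push_cast
          ring
  have hB : ∑ x : k, (t (1 + x)) ^ a = ((gam (Fintype.card k) a : ℤ) : 𝕎 k) := by
    calc ∑ x : k, (t (1 + x)) ^ a
        = ∑ y : k, (t y) ^ a :=
          Equiv.sum_comp (Equiv.addLeft (1 : k)) (fun y : k => (t y) ^ a)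
      _ = ((gam (Fintype.card k) a : ℤ) : 𝕎 k) := by rw [ht]; exact sum_teich_pow a
  have hdvd : (p : 𝕎 k) ^ (kk + 1) ∣
      (∑ x : k, (1 + t x) ^ a) - ∑ x : k, (t (1 + x)) ^ a := by
    rw [← Finset.sum_sub_distrib]
    exact Finset.dvd_sum fun x _ => term_dvd kk a hka x
  have hcast : (((∑ j ∈ range (a + 1), (a.choose j : ℤ) * gam (Fintype.card k) j)
        - gam (Fintype.card k) a : ℤ) : 𝕎 k)
      = (∑ x : k, (1 + t x) ^ a) - ∑ x : k, (t (1 + x)) ^ a := by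
    rw [hA, hB]
    push_cast
    ring
  rwa [hcast]

end FintypeField

lemma int_identity (q a : ℕ) (hq2 : 2 ≤ q) (ha : 0 < a) :
    (∑ j ∈ range (a + 1), (a.choose j : ℤ) * gam q j) - gam q a
      = 1 + ((q : ℤ) - 1) * ∑ b ∈ range a,
          if b * (q - 1) < a then (a.choose (b * (q - 1)) : ℤ) else 0 := by
  have hm : q - 1 ≠ 0 := by omega
  have hcast : ((q - 1 : ℕ) : ℤ) = (q : ℤ) - 1 := by
    have : (1 : ℕ) ≤ q := by omega
    push_cast [Nat.cast_sub this]
    ring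
  -- Step 1: reindex the b-sum as a j-sum
  have hreindex : ∑ b ∈ range a, (if b * (q - 1) < a then (a.choose (b * (q - 1)) : ℤ) else 0)
      = ∑ j ∈ range (a + 1), (if (q - 1) ∣ j ∧ j < a then (a.choose j : ℤ) else 0) := by
    rw [← Finset.sum_filter, ← Finset.sum_filter]
    refine Finset.sum_nbij' (fun b => b * (q - 1)) (fun j => j / (q - 1)) ?_ ?_ ?_ ?_ ?_
    · intro b hb
      simp only [mem_filter, mem_range] at hb ⊢
      exact ⟨by omega, ⟨b, mul_comm b (q - 1)⟩, hb.2⟩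
    · intro j hj
      simp only [mem_filter, mem_range] at hj ⊢
      obtain ⟨hj1, hdvd, hj2⟩ := hj
      constructor
      · calc j / (q - 1) ≤ j := Nat.div_le_self _ _
          _ < a := hj2
      · rw [Nat.div_mul_cancel hdvd]; exact hj2
    · intro b hb
      exact Nat.mul_div_cancel b (by omega)
    · intro j hj
      simp only [mem_filter, mem_range] at hj
      exact Nat.div_mul_cancel hj.2.1
    · intro b hb
      rfl
  rw [hreindex]
  -- Step 2: the j-indexed identity
  obtain ⟨a', rfl⟩ := Nat.exists_eq_succ_of_ne_zero ha.ne'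
  set C : ℕ → ℤ := fun j => ((a' + 1).choose j : ℤ) with hC
  have key : ∑ j ∈ range (a' + 2),
      (C j * gam q j - ((q : ℤ) - 1) * (if (q - 1) ∣ j ∧ j < a' + 1 then C j else 0))
      = 1 + gam q (a' + 1) := by
    rw [Finset.sum_range_succ, Finset.sum_range_succ']
    have hmid : ∀ i ∈ range a',
        C (i + 1) * gam q (i + 1)
          - ((q : ℤ) - 1) * (if (q - 1) ∣ (i + 1) ∧ i + 1 < a' + 1 then C (i + 1) else 0) = 0 := by
      intro i hi
      simp only [mem_range] at hi
      have hlt : i + 1 < a' + 1 := by omega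
      rw [gam, if_neg (Nat.succ_ne_zero i)]
      by_cases hd : (q - 1) ∣ (i + 1)
      · rw [if_pos hd, if_pos ⟨hd, hlt⟩, hcast]; ring
      · rw [if_neg hd, if_neg (by tauto)]; ring
    rw [Finset.sum_eq_zero hmid]
    have h0 : C 0 * gam q 0
        - ((q : ℤ) - 1) * (if (q - 1) ∣ 0 ∧ 0 < a' + 1 then C 0 else 0) = 1 := by
      rw [gam, if_pos rfl, if_pos ⟨dvd_zero _, Nat.succ_pos a'⟩, hC]
      simp only [Nat.choose_zero_right, Nat.cast_one]
      ring
    have hlast : C (a' + 1) * gam q (a' + 1)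
        - ((q : ℤ) - 1) * (if (q - 1) ∣ (a' + 1) ∧ a' + 1 < a' + 1 then C (a' + 1) else 0)
        = gam q (a' + 1) := by
      rw [if_neg (by omega), hC]
      simp only [Nat.choose_self, Nat.cast_one]
      ring
    rw [h0, hlast]
    ring
  have expand : ∑ j ∈ range (a' + 2),
      (C j * gam q j - ((q : ℤ) - 1) * (if (q - 1) ∣ j ∧ j < a' + 1 then C j else 0))
      = (∑ j ∈ range (a' + 2), C j * gam q j)
        - ((q : ℤ) - 1) * ∑ j ∈ range (a' + 2), (if (q - 1) ∣ j ∧ j < a' + 1 then C j else 0) := by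
    rw [Finset.sum_sub_distrib, Finset.mul_sum]
  rw [expand] at key
  have : ∀ j, (if (q - 1) ∣ j ∧ j < a' + 1 then C j else 0)
      = (if (q - 1) ∣ j ∧ j < a' + 1 then ((a' + 1).choose j : ℤ) else 0) := fun j => rfl
  linarith [key]

end CarlitzAux

/-- Generalized Carlitz congruence: if `q` is a power of the prime `p` and `p^k ∣ a` then
`1 + (q-1) * ∑_{0 ≤ b(q-1) < a} binomial(a, b(q-1)) ≡ 0 (mod p^(k+1))`. -/
theorem carlitz_general (p f q k a : ℕ) (hp : p.Prime) (hf : 0 < f) (hq : q = p ^ f)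
    (ha : 0 < a) (hka : p ^ k ∣ a) :
    (1 + ((q : ℤ) - 1) * ∑ b ∈ Finset.range a,
        if b * (q - 1) < a then (a.choose (b * (q - 1)) : ℤ) else 0)
      ≡ 0 [ZMOD (p : ℤ) ^ (k + 1)] := by
  haveI : Fact p.Prime := ⟨hp⟩
  set K := GaloisField p f with hK
  haveI : Fintype K := Fintype.ofFinite K
  haveI : DecidableEq K := Classical.decEq K
  haveI : ExpChar K p := ExpChar.prime hp
  have hcard : Fintype.card K = q := by
    rw [← Nat.card_eq_fintype_card, GaloisField.card p f hf.ne', hq]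
  have hq2 : 2 ≤ q := by
    rw [hq]
    exact Nat.one_lt_pow hf.ne' hp.one_lt
  have hmain := CarlitzAux.witt_main (p := p) (k := K) k a ha hka
  rw [hcard] at hmain
  rw [CarlitzAux.int_identity q a hq2 ha] at hmain
  exact (Int.modEq_zero_iff_dvd).mpr hmain
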